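/- De Finetti representation of the multi-group Curie–Weiss model: Let M ≥ 1, let J be a symmetric positive definite M×M real matrix, let n_1,…,n_M ∈ ℕ with n = n_1+⋯+n_M, set α_λ := n_λ/n and √α := diag(√α_1,…,√α_M), and define F_{n,J}(x) := (1/2) xᵀ √α J^{−1} √α x − Σ_{λ=1}^M α_λ ln cosh(x_λ) for x ∈ ℝ^M. Then there exists a constant c > 0 (depending only on n_1,…,n_M and J) such that for every configuration (x_{λi}) ∈ {−1,1}^n, exp((1/2) Σ_{λ,ν=1}^M (J_{λν}/√(n_λ n_ν)) Σ_{i=1}^{n_λ} Σ_{j=1}^{n_ν} x_{λi} x_{νj}) = c ∫_{ℝ^M} P_{tanh m}(X_{11}=x_{11},…,X_{Mn_M}=x_{Mn_M}) exp(−n F_{n,J}(m)) dm, where the integral is with respect to Lebesgue measure on ℝ^M. -/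

import Mathlib

open MeasureTheory ProbabilityTheory Filter Topology Asymptotics

noncomputable section

/-- Configuration space for `M` groups of sizes `N 1, …, N M`: each voter casts a
vote encoded as a `Bool` (`true` ↦ +1, `false` ↦ −1). -/
abbrev Conf (M : ℕ) (N : Fin M → ℕ) : Type := ∀ lam : Fin M, Fin (N lam) → Bool

/-- The ±1 value of a vote. -/
def val (b : Bool) : ℝ := if b then 1 else -1

/-- The measure on `Bool` with mass `(1+b)/2` on `true` and `(1−b)/2` on `false`;
for `b ∈ [−1,1]` this is the law of a single vote with bias `b`. -/
def bern (b : ℝ) : Measure Bool :=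
  ENNReal.ofReal ((1 + b) / 2) • Measure.dirac true
    + ENNReal.ofReal ((1 - b) / 2) • Measure.dirac false

/-- The product measure `P_b` under which all votes are independent and each vote in
group `lam` has bias `b lam`. -/
def prodVote {M : ℕ} (N : Fin M → ℕ) (b : Fin M → ℝ) : Measure (Conf M N) :=
  Measure.pi fun lam => Measure.pi fun _ => bern (b lam)

/-- The voting measure `ℙ_n` with de Finetti measure `μn`:
`ℙ_n(A) = ∫ P_{tanh m}(A) μn(dm)`. -/
def votingMeasure {M : ℕ} (N : Fin M → ℕ) (μn : Measure (Fin M → ℝ)) :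
    Measure (Conf M N) :=
  μn.bind fun m => prodVote N fun lam => Real.tanh (m lam)

/-- The voting margin `S_{n,lam}` of group `lam`. -/
def margin {M : ℕ} {N : Fin M → ℕ} (lam : Fin M) (ω : Conf M N) : ℝ :=
  ∑ i, val (ω lam i)

/-- The standard Gaussian measure `𝒩(0, I_M)` on `ℝ^M`. -/
def stdGaussian (M : ℕ) : Measure (Fin M → ℝ) :=
  Measure.pi fun _ => gaussianReal 0 1

/-- The function `F_{n,J}(m) = (1/2) mᵀ √α J⁻¹ √α m − Σ_λ α_λ ln cosh m_λ` of the
de Finetti representation of the multi-group Curie–Weiss model, where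
`α_λ = n_λ/n`. -/
def cwFmulti {M : ℕ} (J : Matrix (Fin M) (Fin M) ℝ) (N : Fin M → ℕ)
    (m : Fin M → ℝ) : ℝ :=
  (1 / 2) * ∑ lam, ∑ ν,
      Real.sqrt ((N lam : ℝ) / ∑ κ, (N κ : ℕ)) * J⁻¹ lam ν *
        Real.sqrt ((N ν : ℝ) / ∑ κ, (N κ : ℕ)) * m lam * m ν
    - ∑ lam, ((N lam : ℝ) / ∑ κ, (N κ : ℕ)) * Real.log (Real.cosh (m lam))


section CWAux
open Matrix Real


lemma gauss1 (u : ℝ) :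
    ∫ y : ℝ, Real.exp (u * y - y ^ 2 / 2) = Real.sqrt (2 * Real.pi) * Real.exp (u ^ 2 / 2) := by
  have h : ∀ y : ℝ, u * y - y ^ 2 / 2 = -(1/2 : ℝ) * (y - u) ^ 2 + u ^ 2 / 2 := fun y => by ring
  simp_rw [h, Real.exp_add, integral_mul_const]
  rw [integral_sub_right_eq_self (fun y => Real.exp (-(1/2 : ℝ) * y ^ 2)) u,
    integral_gaussian]
  rw [show π/(1/2:ℝ) = 2*π by ring]

lemma gaussM (M : ℕ) (u : Fin M → ℝ) :
    ∫ y : Fin M → ℝ, Real.exp (u ⬝ᵥ y - (1/2) * (y ⬝ᵥ y))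
      = Real.sqrt (2 * Real.pi) ^ M * Real.exp ((1/2) * (u ⬝ᵥ u)) := by
  have h : ∀ y : Fin M → ℝ, Real.exp (u ⬝ᵥ y - (1/2) * (y ⬝ᵥ y))
      = ∏ i, Real.exp (u i * y i - y i ^ 2 / 2) := by
    intro y
    rw [← Real.exp_sum]
    congr 1
    rw [dotProduct, dotProduct, Finset.mul_sum, ← Finset.sum_sub_distrib]
    exact Finset.sum_congr rfl fun i _ => by ring
  simp_rw [h]
  rw [integral_fintype_prod_volume_eq_prod (f := fun (i : Fin M) (y : ℝ) => Real.exp (u i * y - y ^ 2 / 2))]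
  simp_rw [gauss1]
  rw [Finset.prod_mul_distrib, Finset.prod_const, ← Real.exp_sum, Finset.card_univ, Fintype.card_fin]
  congr 1
  rw [dotProduct, Finset.mul_sum]
  exact congrArg Real.exp (Finset.sum_congr rfl fun i _ => by ring)

lemma integral_comp_mulVec {M : ℕ} (A : Matrix (Fin M) (Fin M) ℝ) (hA : A.det ≠ 0)
    (f : (Fin M → ℝ) → ℝ) :
    ∫ m : Fin M → ℝ, f (A.mulVec m) = |A.det|⁻¹ * ∫ y, f y := by
  have hinv : Invertible A := A.invertibleOfIsUnitDet (isUnit_iff_ne_zero.mpr hA)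
  let e : (Fin M → ℝ) ≃ₗ[ℝ] (Fin M → ℝ) := A.toLinearEquiv' hinv
  let ec : (Fin M → ℝ) ≃L[ℝ] (Fin M → ℝ) := e.toContinuousLinearEquiv
  let em : (Fin M → ℝ) ≃ᵐ (Fin M → ℝ) := ec.toHomeomorph.toMeasurableEquiv
  have hdet : LinearMap.det (e : (Fin M → ℝ) →ₗ[ℝ] (Fin M → ℝ)) = A.det := by
    rw [show (e : (Fin M → ℝ) →ₗ[ℝ] (Fin M → ℝ)) = Matrix.toLin' A from
      Matrix.toLinearEquiv'_apply A hinv]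
    exact LinearMap.det_toLin' A
  have hmap : Measure.map em volume = ENNReal.ofReal |A.det|⁻¹ • volume := by
    have h := Measure.map_linearMap_addHaar_eq_smul_addHaar (μ := volume)
      (f := (e : (Fin M → ℝ) →ₗ[ℝ] (Fin M → ℝ))) (by rw [hdet]; exact hA)
    rw [hdet, abs_inv] at h
    exact h
  have h1 : ∀ m, em m = A.mulVec m := fun m => rfl
  calc ∫ m : Fin M → ℝ, f (A.mulVec m) = ∫ m, f (em m) := by simp_rw [h1]
    _ = ∫ y, f y ∂(Measure.map em volume) := (MeasureTheory.integral_map_equiv em f).symm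
    _ = |A.det|⁻¹ * ∫ y, f y := by
        rw [hmap, integral_smul_measure, ENNReal.toReal_ofReal (by positivity), smul_eq_mul]

open scoped MatrixOrder in
lemma gauss_matrix {M : ℕ} (Q : Matrix (Fin M) (Fin M) ℝ) (hQ : Q.PosDef) :
    ∃ C : ℝ, 0 < C ∧ ∀ t : Fin M → ℝ,
      ∫ m : Fin M → ℝ, Real.exp (t ⬝ᵥ m - (1/2) * (m ⬝ᵥ Q.mulVec m))
        = C * Real.exp ((1/2) * (t ⬝ᵥ Q⁻¹.mulVec t)) := by
  set R := CFC.sqrt Q with hRdef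
  have hRsd : R.PosSemidef := (CFC.sqrt_nonneg Q).posSemidef
  have hRR : R * R = Q := CFC.sqrt_mul_sqrt_self Q hQ.posSemidef.nonneg
  have hRsymm : Rᵀ = R := hRsd.isHermitian
  have hdetR : R.det ≠ 0 := by
    intro h
    have : Q.det = 0 := by rw [← hRR, Matrix.det_mul, h, mul_zero]
    exact hQ.det_pos.ne' this
  have hRinv : R⁻¹.det ≠ 0 := by rwa [Matrix.det_nonsing_inv, Ring.inverse_eq_inv', ne_eq, inv_eq_zero]
  have hRiT : R⁻¹ᵀ = R⁻¹ := by rw [Matrix.transpose_nonsing_inv, hRsymm]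
  refine ⟨|R.det|⁻¹ * Real.sqrt (2 * Real.pi) ^ M, by positivity, fun t => ?_⟩
  have key := integral_comp_mulVec R⁻¹ hRinv
    (fun m => Real.exp (t ⬝ᵥ m - (1/2) * (m ⬝ᵥ Q.mulVec m)))
  rw [Matrix.det_nonsing_inv, Ring.inverse_eq_inv', abs_inv, inv_inv] at key
  have h2 : ∀ y : Fin M → ℝ,
      Real.exp (t ⬝ᵥ R⁻¹.mulVec y - (1/2) * (R⁻¹.mulVec y ⬝ᵥ Q.mulVec (R⁻¹.mulVec y)))
        = Real.exp ((R⁻¹.mulVec t) ⬝ᵥ y - (1/2) * (y ⬝ᵥ y)) := by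
    intro y
    congr 1
    have e1 : t ⬝ᵥ R⁻¹.mulVec y = (R⁻¹.mulVec t) ⬝ᵥ y := by
      rw [Matrix.dotProduct_mulVec, ← Matrix.mulVec_transpose, hRiT]
    have e2 : R⁻¹.mulVec y ⬝ᵥ Q.mulVec (R⁻¹.mulVec y) = y ⬝ᵥ y := by
      rw [Matrix.mulVec_mulVec, ← hRR,
        Matrix.mul_nonsing_inv_cancel_right _ _ (isUnit_iff_ne_zero.mpr hdetR),
        Matrix.dotProduct_mulVec, ← Matrix.mulVec_transpose, hRsymm, Matrix.mulVec_mulVec,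
        Matrix.mul_nonsing_inv _ (isUnit_iff_ne_zero.mpr hdetR), Matrix.one_mulVec]
    rw [e1, e2]
  have h3 : (R⁻¹.mulVec t) ⬝ᵥ (R⁻¹.mulVec t) = t ⬝ᵥ Q⁻¹.mulVec t := by
    rw [Matrix.dotProduct_mulVec (R⁻¹.mulVec t), ← Matrix.mulVec_transpose, hRiT,
      Matrix.mulVec_mulVec, ← Matrix.mul_inv_rev, hRR]
    exact dotProduct_comm _ _
  calc ∫ m : Fin M → ℝ, Real.exp (t ⬝ᵥ m - (1/2) * (m ⬝ᵥ Q.mulVec m))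
      = |R.det|⁻¹ * ∫ m : Fin M → ℝ,
          Real.exp (t ⬝ᵥ R⁻¹.mulVec m - (1/2) * (R⁻¹.mulVec m ⬝ᵥ Q.mulVec (R⁻¹.mulVec m))) := by
        rw [key, ← mul_assoc, inv_mul_cancel₀ (abs_ne_zero.mpr hdetR), one_mul]
    _ = |R.det|⁻¹ * ∫ y : Fin M → ℝ, Real.exp ((R⁻¹.mulVec t) ⬝ᵥ y - (1/2) * (y ⬝ᵥ y)) := by
        simp_rw [h2]
    _ = |R.det|⁻¹ * (Real.sqrt (2 * Real.pi) ^ M * Real.exp ((1/2) * (t ⬝ᵥ Q⁻¹.mulVec t))) := by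
        rw [gaussM, h3]
    _ = _ := by ring

instance bern_finite (b : ℝ) : IsFiniteMeasure (bern b) := by
  constructor
  rw [bern]
  simp only [Measure.add_apply, Measure.smul_apply, smul_eq_mul]
  exact ENNReal.add_lt_top.2 ⟨ENNReal.mul_lt_top ENNReal.ofReal_lt_top (by simp),
    ENNReal.mul_lt_top ENNReal.ofReal_lt_top (by simp)⟩

lemma bern_tanh_singleton (t : ℝ) (v : Bool) :
    bern (Real.tanh t) {v} = ENNReal.ofReal (Real.exp (t * val v) / (2 * Real.cosh t)) := by
  have hc : Real.cosh t ≠ 0 := (Real.cosh_pos t).ne'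
  cases v with
  | true =>
      have : (1 + Real.tanh t) / 2 = Real.exp (t * val true) / (2 * Real.cosh t) := by
        rw [Real.tanh_eq_sinh_div_cosh]
        field_simp [val]
        simp [val, Real.cosh_add_sinh]
      rw [bern, ← this]
      simp [Measure.dirac_apply' _ (measurableSet_singleton _), Set.indicator]
  | false =>
      have : (1 - Real.tanh t) / 2 = Real.exp (t * val false) / (2 * Real.cosh t) := by
        rw [Real.tanh_eq_sinh_div_cosh]
        field_simp [val]
        simp [val, Real.cosh_sub_sinh]
      rw [bern, ← this]
      simp [Measure.dirac_apply' _ (measurableSet_singleton _), Set.indicator]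

lemma prodVote_singleton {M : ℕ} (N : Fin M → ℕ) (m : Fin M → ℝ) (x : Conf M N) :
    ((prodVote N fun lam => Real.tanh (m lam)) {x}).toReal
      = ∏ lam, (Real.exp (m lam * ∑ i, val (x lam i)) / (2 * Real.cosh (m lam)) ^ (N lam)) := by
  rw [prodVote, show ({x} : Set (Conf M N)) = Set.univ.pi fun lam => {x lam} by
      ext y; simp [funext_iff, Set.mem_pi]]
  rw [Measure.pi_pi]
  have h1 : ∀ lam : Fin M, (Measure.pi fun _ : Fin (N lam) => bern (Real.tanh (m lam))) {x lam}
      = ENNReal.ofReal (Real.exp (m lam * ∑ i, val (x lam i)) / (2 * Real.cosh (m lam)) ^ (N lam)) := by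
    intro lam
    rw [show ({x lam} : Set (Fin (N lam) → Bool)) = Set.univ.pi fun i => {x lam i} by
        ext y; simp [funext_iff, Set.mem_pi]]
    rw [Measure.pi_pi]
    simp_rw [bern_tanh_singleton]
    rw [← ENNReal.ofReal_prod_of_nonneg (fun i _ => by positivity)]
    congr 1
    rw [Finset.prod_div_distrib, ← Real.exp_sum, Finset.prod_const, Finset.card_univ,
      Fintype.card_fin, ← Finset.mul_sum]
  simp_rw [h1]
  rw [← ENNReal.ofReal_prod_of_nonneg (fun lam _ => by positivity),
    ENNReal.toReal_ofReal (Finset.prod_nonneg fun lam _ => by positivity)]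

end CWAux

open Matrix in
/-- **De Finetti representation of the multi-group Curie–Weiss model**: for a
symmetric positive definite coupling matrix `J` there is a constant `c > 0` such
that for every configuration `x`,
`exp((1/2) Σ_{λ,ν} (J_{λν}/√(n_λ n_ν)) Σ_{i,j} x_{λi} x_{νj})
  = c ∫_{ℝ^M} P_{tanh m}(x) e^{−n F_{n,J}(m)} dm`. -/
theorem multigroup_cwm_de_finetti
    (M : ℕ) (hM : 1 ≤ M)
    (J : Matrix (Fin M) (Fin M) ℝ) (hJsymm : J.IsSymm) (hJpos : J.PosDef)
    (N : Fin M → ℕ) (hNpos : ∀ lam, 0 < N lam) :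
    ∃ c : ℝ, 0 < c ∧ ∀ x : Conf M N,
      Real.exp ((1 / 2) * ∑ lam, ∑ ν,
          J lam ν / Real.sqrt ((N lam : ℝ) * (N ν : ℝ)) *
            ∑ i, ∑ j, val (x lam i) * val (x ν j))
        = c * ∫ m : Fin M → ℝ,
            ((prodVote N fun lam => Real.tanh (m lam)) {x}).toReal *
              Real.exp (-(∑ κ, (N κ : ℕ) : ℝ) * cwFmulti J N m) := by
  classical
  set n : ℕ := ∑ κ, N κ with hn_def
  have hn : 0 < n := Finset.sum_pos (fun lam _ => hNpos lam)
    ⟨⟨0, hM⟩, Finset.mem_univ _⟩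
  have hnR : (0:ℝ) < (n:ℝ) := by exact_mod_cast hn
  have hcast : (∑ κ, ((N κ : ℕ) : ℝ)) = (n : ℝ) := by rw [hn_def]; push_cast; rfl
  have hsq : ∀ lam, (0:ℝ) < Real.sqrt (N lam) :=
    fun lam => Real.sqrt_pos.mpr (by exact_mod_cast hNpos lam)
  set D : Matrix (Fin M) (Fin M) ℝ := Matrix.diagonal (fun lam => Real.sqrt (N lam)) with hD
  set E : Matrix (Fin M) (Fin M) ℝ := Matrix.diagonal (fun lam => (Real.sqrt (N lam))⁻¹) with hE
  have hDE : D * E = 1 := by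
    rw [hD, hE, Matrix.diagonal_mul_diagonal]
    have h1 : (fun lam => Real.sqrt (N lam) * (Real.sqrt (N lam))⁻¹) = fun _ : Fin M => (1:ℝ) :=
      funext fun lam => mul_inv_cancel₀ (hsq lam).ne'
    rw [h1, Matrix.diagonal_one]
  have hJinv : J⁻¹.PosDef := hJpos.inv
  have hJu : IsUnit J.det := isUnit_iff_ne_zero.mpr hJpos.det_pos.ne'
  set Q : Matrix (Fin M) (Fin M) ℝ := D * J⁻¹ * D with hQdef
  have hQherm : Q.IsHermitian := by
    have h1 : J⁻¹.IsHermitian := hJinv.isHermitian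
    have hDh : Dᴴ = D := by
      rw [hD, Matrix.diagonal_conjTranspose]
      congr 1
    rw [Matrix.IsHermitian, hQdef, Matrix.conjTranspose_mul, Matrix.conjTranspose_mul,
      hDh, h1.eq, Matrix.mul_assoc]
  have hDvec : ∀ x : Fin M → ℝ, x ≠ 0 → D.mulVec x ≠ 0 := by
    intro x hx h0
    apply hx
    funext lam
    have := congrFun h0 lam
    rw [Matrix.mulVec_diagonal] at this
    simpa [Pi.zero_apply, (hsq lam).ne'] using this
  have hQ : Q.PosDef := by
    refine Matrix.PosDef.of_dotProduct_mulVec_pos hQherm fun x hx => ?_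
    have h1 : star x ⬝ᵥ Q.mulVec x = star (D.mulVec x) ⬝ᵥ J⁻¹.mulVec (D.mulVec x) := by
      rw [hQdef, ← Matrix.mulVec_mulVec, ← Matrix.mulVec_mulVec]
      rw [star_trivial, star_trivial, Matrix.dotProduct_mulVec x D, ← Matrix.mulVec_transpose,
        Matrix.diagonal_transpose]
    rw [h1]
    exact hJinv.dotProduct_mulVec_pos (hDvec x hx)
  have hQinv : Q⁻¹ = E * J * E := by
    apply Matrix.inv_eq_right_inv
    calc D * J⁻¹ * D * (E * J * E) = D * J⁻¹ * (D * E * (J * E)) := by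
          simp only [Matrix.mul_assoc]
      _ = D * (J⁻¹ * J) * E := by rw [hDE, Matrix.one_mul]; simp only [Matrix.mul_assoc]
      _ = 1 := by rw [Matrix.nonsing_inv_mul J hJu, Matrix.mul_one, hDE]
  obtain ⟨C, hC, hgauss⟩ := gauss_matrix Q hQ
  refine ⟨2 ^ n / C, by positivity, fun x => ?_⟩
  set S : Fin M → ℝ := fun lam => ∑ i, val (x lam i) with hS
  -- pointwise integrand identity
  have hsn : Real.sqrt (n:ℝ) ≠ 0 := (Real.sqrt_pos.mpr hnR).ne'
  have hnn : Real.sqrt (n:ℝ) * Real.sqrt (n:ℝ) = (n:ℝ) := Real.mul_self_sqrt hnR.le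
  have hQentry : ∀ lam ν, Q lam ν = Real.sqrt (N lam) * J⁻¹ lam ν * Real.sqrt (N ν) := by
    intro lam ν
    rw [hQdef, Matrix.mul_diagonal, Matrix.diagonal_mul]
  have hexpF : ∀ m : Fin M → ℝ,
      Real.exp (-(n : ℝ) * cwFmulti J N m)
        = Real.exp (-(1/2) * (m ⬝ᵥ Q.mulVec m)) * ∏ lam, Real.cosh (m lam) ^ (N lam) := by
    intro m
    have hQform : m ⬝ᵥ Q.mulVec m
        = ∑ lam, ∑ ν, Real.sqrt (N lam) * J⁻¹ lam ν * Real.sqrt (N ν) * m lam * m ν := by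
      simp only [dotProduct, Matrix.mulVec, Finset.mul_sum]
      refine Finset.sum_congr rfl fun lam _ => Finset.sum_congr rfl fun ν _ => ?_
      rw [hQentry]; ring
    have hterm : ∀ lam ν : Fin M,
        (n:ℝ) * (Real.sqrt ((N lam : ℝ) / (n:ℝ)) * J⁻¹ lam ν *
          Real.sqrt ((N ν : ℝ) / (n:ℝ)) * m lam * m ν)
        = Real.sqrt (N lam) * J⁻¹ lam ν * Real.sqrt (N ν) * m lam * m ν := by
      intro lam ν
      rw [Real.sqrt_div (Nat.cast_nonneg (N lam)) (n:ℝ),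
        Real.sqrt_div (Nat.cast_nonneg (N ν)) (n:ℝ)]
      field_simp
      rw [Real.sq_sqrt hnR.le]
      ring
    have hF : -(n:ℝ) * cwFmulti J N m
        = (∑ lam, (N lam : ℝ) * Real.log (Real.cosh (m lam)))
          - (1/2) * (m ⬝ᵥ Q.mulVec m) := by
      rw [cwFmulti, ← hn_def]
      have hA : (n:ℝ) * ((1/2) * ∑ lam, ∑ ν,
          Real.sqrt ((N lam : ℝ) / (n:ℝ)) * J⁻¹ lam ν *
            Real.sqrt ((N ν : ℝ) / (n:ℝ)) * m lam * m ν)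
          = (1/2) * (m ⬝ᵥ Q.mulVec m) := by
        rw [hQform]
        have step1 : (n:ℝ) * ((1/2) * ∑ lam, ∑ ν,
            Real.sqrt ((N lam : ℝ) / (n:ℝ)) * J⁻¹ lam ν *
              Real.sqrt ((N ν : ℝ) / (n:ℝ)) * m lam * m ν)
            = (1/2) * ∑ lam, (n:ℝ) * ∑ ν,
            Real.sqrt ((N lam : ℝ) / (n:ℝ)) * J⁻¹ lam ν *
              Real.sqrt ((N ν : ℝ) / (n:ℝ)) * m lam * m ν := by
          rw [← Finset.mul_sum]
          ring
        rw [step1]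
        congr 1
        refine Finset.sum_congr rfl fun lam _ => ?_
        rw [Finset.mul_sum]
        exact Finset.sum_congr rfl fun ν _ => hterm lam ν
      have hB : (n:ℝ) * ∑ lam, ((N lam : ℝ) / (n:ℝ)) * Real.log (Real.cosh (m lam))
          = ∑ lam, (N lam : ℝ) * Real.log (Real.cosh (m lam)) := by
        rw [Finset.mul_sum]
        refine Finset.sum_congr rfl fun lam _ => ?_
        field_simp
      rw [neg_mul, mul_sub, hA, hB]
      ring
    rw [hF, Real.exp_sub, Real.exp_sum]
    have hcosh : ∀ lam : Fin M, Real.exp ((N lam : ℝ) * Real.log (Real.cosh (m lam)))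
        = Real.cosh (m lam) ^ (N lam) := by
      intro lam
      rw [Real.exp_nat_mul, Real.exp_log (Real.cosh_pos _)]
    simp_rw [hcosh]
    rw [div_eq_mul_inv, ← Real.exp_neg]
    ring
  have hpt : ∀ m : Fin M → ℝ,
      ((prodVote N fun lam => Real.tanh (m lam)) {x}).toReal *
        Real.exp (-(n : ℝ) * cwFmulti J N m)
      = ((2:ℝ)^n)⁻¹ * Real.exp (S ⬝ᵥ m - (1/2) * (m ⬝ᵥ Q.mulVec m)) := by
    intro m
    rw [hexpF m, prodVote_singleton]
    have hprod : (∏ lam, Real.exp (m lam * S lam) / (2 * Real.cosh (m lam)) ^ (N lam)) *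
        (∏ lam, Real.cosh (m lam) ^ (N lam)) = ((2:ℝ)^n)⁻¹ * Real.exp (S ⬝ᵥ m) := by
      rw [← Finset.prod_mul_distrib]
      have h1 : ∀ lam ∈ Finset.univ, Real.exp (m lam * S lam) /
          (2 * Real.cosh (m lam)) ^ (N lam) * Real.cosh (m lam) ^ (N lam)
          = ((2:ℝ) ^ (N lam))⁻¹ * Real.exp (m lam * S lam) := by
        intro lam _
        rw [mul_pow]
        have hc : Real.cosh (m lam) ^ (N lam) ≠ 0 :=
          pow_ne_zero _ (Real.cosh_pos (m lam)).ne'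
        field_simp
      rw [Finset.prod_congr rfl h1, Finset.prod_mul_distrib, Finset.prod_inv_distrib,
        Finset.prod_pow_eq_pow_sum, ← hn_def, ← Real.exp_sum]
      congr 1
      rw [dotProduct]
      exact congrArg Real.exp (Finset.sum_congr rfl fun lam _ => mul_comm _ _)
    calc (∏ lam, Real.exp (m lam * S lam) / (2 * Real.cosh (m lam)) ^ (N lam)) *
          (Real.exp (-(1/2) * (m ⬝ᵥ Q.mulVec m)) * ∏ lam, Real.cosh (m lam) ^ (N lam))
        = ((∏ lam, Real.exp (m lam * S lam) / (2 * Real.cosh (m lam)) ^ (N lam)) *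
            (∏ lam, Real.cosh (m lam) ^ (N lam))) * Real.exp (-(1/2) * (m ⬝ᵥ Q.mulVec m)) := by
          ring
      _ = ((2:ℝ)^n)⁻¹ * Real.exp (S ⬝ᵥ m) * Real.exp (-(1/2) * (m ⬝ᵥ Q.mulVec m)) := by
          rw [hprod]
      _ = ((2:ℝ)^n)⁻¹ * Real.exp (S ⬝ᵥ m - (1/2) * (m ⬝ᵥ Q.mulVec m)) := by
          rw [mul_assoc, ← Real.exp_add, neg_mul, ← sub_eq_add_neg]
  simp_rw [hcast]
  simp_rw [hpt]
  rw [MeasureTheory.integral_const_mul, hgauss S]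
  have hL : ((1 / 2) * ∑ lam, ∑ ν,
      J lam ν / Real.sqrt ((N lam : ℝ) * (N ν : ℝ)) *
        ∑ i, ∑ j, val (x lam i) * val (x ν j))
      = (1/2) * (S ⬝ᵥ Q⁻¹.mulVec S) := by
    congr 1
    have hQi : ∀ lam ν, Q⁻¹ lam ν
        = (Real.sqrt (N lam))⁻¹ * J lam ν * (Real.sqrt (N ν))⁻¹ := by
      intro lam ν
      rw [hQinv, hE, Matrix.mul_diagonal, Matrix.diagonal_mul]
    have hform : S ⬝ᵥ Q⁻¹.mulVec S = ∑ lam, ∑ ν, Q⁻¹ lam ν * S lam * S ν := by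
      simp only [dotProduct, Matrix.mulVec, Finset.mul_sum]
      exact Finset.sum_congr rfl fun lam _ => Finset.sum_congr rfl fun ν _ => by ring
    rw [hform]
    refine Finset.sum_congr rfl fun lam _ => Finset.sum_congr rfl fun ν _ => ?_
    have hsum : (∑ i, ∑ j, val (x lam i) * val (x ν j)) = S lam * S ν := by
      rw [hS, Finset.sum_mul_sum]
    rw [hsum, hQi, Real.sqrt_mul (Nat.cast_nonneg _)]
    field_simp
  rw [hL]
  have h2n : ((2:ℝ)^n) ≠ 0 := by positivity
  field_simp
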